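/- Let p be a probability distribution on a finite set with p(y_1) > p(y_i). Let Y_1,…,Y_n be i.i.d. samples from p. Then P(Σ_{j=1}^n (1{Y_j = y_1} - 1{Y_j = y_i}) ≤ 0) ≤ exp(-n Δ_i²), where Δ_i² = -ln(1 - (√p(y_1) - √p(y_i))²). -/

import Mathlib

open Finset Real

theorem chernoff_pairwise {Y : Type*} [Fintype Y] [DecidableEq Y]
    (p : Y → ℝ) (hp0 : ∀ y, 0 ≤ p y) (hp1 : ∑ y, p y = 1)
    (y1 yi : Y) (hne : y1 ≠ yi) (hlt : p yi < p y1) (n : ℕ) :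
    ∑ ω ∈ Finset.univ.filter (fun ω : Fin n → Y =>
        (∑ j, ((if ω j = y1 then (1:ℝ) else 0) - (if ω j = yi then (1:ℝ) else 0))) ≤ 0),
      ∏ j, p (ω j)
    ≤ Real.exp (-(n : ℝ) * (-Real.log (1 - (Real.sqrt (p y1) - Real.sqrt (p yi)) ^ 2))) := by
  set a := p y1 with ha_def
  set b := p yi with hb_def
  have hb0 : 0 ≤ b := hp0 yi
  have ha0 : 0 ≤ a := hp0 y1
  have hapos : 0 < a := lt_of_le_of_lt hb0 hlt
  have ha1 : a ≤ 1 := by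
    rw [← hp1]
    exact Finset.single_le_sum (fun y _ => hp0 y) (Finset.mem_univ y1)
  set c := 1 - (Real.sqrt a - Real.sqrt b) ^ 2 with hc_def
  have hsq : 0 ≤ Real.sqrt a - Real.sqrt b :=
    sub_nonneg.mpr (Real.sqrt_le_sqrt hlt.le)
  have hsqlt : Real.sqrt a - Real.sqrt b ≤ Real.sqrt a := by
    nlinarith [Real.sqrt_nonneg b]
  have hc0 : 0 ≤ c := by
    have h1 : (Real.sqrt a - Real.sqrt b) ^ 2 ≤ a := by
      nlinarith [Real.sq_sqrt ha0, Real.sqrt_nonneg a]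
    simp only [hc_def]; linarith
  -- the key bound: LHS ≤ c ^ n suffices when c > 0; trivial bound otherwise
  have hprod_nonneg : ∀ ω : Fin n → Y, 0 ≤ ∏ j, p (ω j) :=
    fun ω => Finset.prod_nonneg (fun j _ => hp0 (ω j))
  by_cases hc : c = 0
  · -- then RHS = exp 0 = 1 ≥ LHS
    rw [hc, Real.log_zero, neg_zero, mul_zero, Real.exp_zero]
    calc ∑ ω ∈ Finset.univ.filter (fun ω : Fin n → Y =>
          (∑ j, ((if ω j = y1 then (1:ℝ) else 0) - (if ω j = yi then (1:ℝ) else 0))) ≤ 0),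
        ∏ j, p (ω j)
        ≤ ∑ ω : Fin n → Y, ∏ j, p (ω j) :=
          Finset.sum_le_sum_of_subset_of_nonneg (Finset.filter_subset _ _)
            (fun ω _ _ => hprod_nonneg ω)
      _ = (∑ y, p y) ^ n := (Fintype.sum_pow p n).symm
      _ = 1 := by rw [hp1, one_pow]
  · have hcpos : 0 < c := lt_of_le_of_ne hc0 (Ne.symm hc)
    -- RHS = c ^ n
    have hRHS : Real.exp (-(n : ℝ) * (-Real.log c)) = c ^ n := by
      rw [neg_mul_neg, Real.exp_nat_mul, Real.exp_log hcpos]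
    rw [hRHS]
    -- pick the tilting function g
    by_cases hb : b = 0
    · -- degenerate case: p yi = 0
      set f : Y → ℝ := fun y => if y = y1 then 0 else p y with hf_def
      have hf0 : ∀ y, 0 ≤ f y := fun y => by
        simp only [hf_def]; split <;> [rfl; exact hp0 y]
      have hstep : ∀ ω ∈ Finset.univ.filter (fun ω : Fin n → Y =>
          (∑ j, ((if ω j = y1 then (1:ℝ) else 0) - (if ω j = yi then (1:ℝ) else 0))) ≤ 0),
          ∏ j, p (ω j) ≤ ∏ j, f (ω j) := by
        intro ω hω
        rw [Finset.mem_filter] at hω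
        by_cases hyi : ∃ j, ω j = yi
        · obtain ⟨j, hj⟩ := hyi
          have : p (ω j) = 0 := by rw [hj, ← hb_def, hb]
          rw [Finset.prod_eq_zero (Finset.mem_univ j) this]
          exact Finset.prod_nonneg (fun j _ => hf0 (ω j))
        · push_neg at hyi
          by_cases hy1 : ∃ j, ω j = y1
          · exfalso
            obtain ⟨j, hj⟩ := hy1
            have hterm : ∀ k : Fin n, (0:ℝ) ≤
                ((if ω k = y1 then (1:ℝ) else 0) - (if ω k = yi then (1:ℝ) else 0)) := by
              intro k
              rw [if_neg (hyi k)]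
              split <;> norm_num
            have h1 : (1:ℝ) ≤ ∑ k, ((if ω k = y1 then (1:ℝ) else 0) -
                (if ω k = yi then (1:ℝ) else 0)) := by
              have := Finset.single_le_sum (fun k _ => hterm k) (Finset.mem_univ j)
              rwa [if_pos hj, if_neg (hj ▸ hne), sub_zero] at this
            linarith [hω.2]
          · push_neg at hy1
            apply le_of_eq
            apply Finset.prod_congr rfl
            intro j _
            simp only [hf_def, if_neg (hy1 j)]
      have hcval : c = 1 - a := by
        simp only [hc_def, ← hb_def, hb, Real.sqrt_zero, sub_zero, Real.sq_sqrt ha0]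
      calc ∑ ω ∈ Finset.univ.filter (fun ω : Fin n → Y =>
            (∑ j, ((if ω j = y1 then (1:ℝ) else 0) - (if ω j = yi then (1:ℝ) else 0))) ≤ 0),
          ∏ j, p (ω j)
          ≤ ∑ ω ∈ Finset.univ.filter (fun ω : Fin n → Y =>
            (∑ j, ((if ω j = y1 then (1:ℝ) else 0) - (if ω j = yi then (1:ℝ) else 0))) ≤ 0),
          ∏ j, f (ω j) := Finset.sum_le_sum hstep
        _ ≤ ∑ ω : Fin n → Y, ∏ j, f (ω j) :=
            Finset.sum_le_sum_of_subset_of_nonneg (Finset.filter_subset _ _)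
              (fun ω _ _ => Finset.prod_nonneg (fun j _ => hf0 (ω j)))
        _ = (∑ y, f y) ^ n := (Fintype.sum_pow f n).symm
        _ = c ^ n := by
            congr 1
            have h2 : ∀ y, f y = p y - (if y = y1 then a else 0) := by
              intro y
              by_cases hy : y = y1
              · subst hy; simp [hf_def, ← ha_def]
              · simp [hf_def, hy]
            rw [Finset.sum_congr rfl (fun y _ => h2 y), Finset.sum_sub_distrib,
              Finset.sum_ite_eq' Finset.univ y1, if_pos (Finset.mem_univ y1), hp1, hcval]
    · -- main case: 0 < b
      have hbpos : 0 < b := lt_of_le_of_ne hb0 (Ne.symm hb)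
      set θ : ℝ := Real.sqrt b / Real.sqrt a with hθ_def
      have hsa : 0 < Real.sqrt a := Real.sqrt_pos.mpr hapos
      have hsb : 0 < Real.sqrt b := Real.sqrt_pos.mpr hbpos
      have hθpos : 0 < θ := div_pos hsb hsa
      have hθlt : θ < 1 := (div_lt_one hsa).mpr (Real.sqrt_lt_sqrt hb0 hlt)
      have hlogθ : Real.log θ ≤ 0 := Real.log_nonpos hθpos.le hθlt.le
      set g : Y → ℝ := fun y => Real.exp
        (((if y = y1 then (1:ℝ) else 0) - (if y = yi then (1:ℝ) else 0)) * Real.log θ)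
        with hg_def
      have hstep : ∀ ω ∈ Finset.univ.filter (fun ω : Fin n → Y =>
          (∑ j, ((if ω j = y1 then (1:ℝ) else 0) - (if ω j = yi then (1:ℝ) else 0))) ≤ 0),
          ∏ j, p (ω j) ≤ ∏ j, p (ω j) * g (ω j) := by
        intro ω hω
        rw [Finset.mem_filter] at hω
        rw [Finset.prod_mul_distrib]
        have hg_prod : ∏ j, g (ω j) = Real.exp
            ((∑ j, ((if ω j = y1 then (1:ℝ) else 0) - (if ω j = yi then (1:ℝ) else 0)))
              * Real.log θ) := by
          rw [Finset.sum_mul, ← Real.exp_sum]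
        have h1 : 1 ≤ ∏ j, g (ω j) := by
          rw [hg_prod]
          have : 0 ≤ (∑ j, ((if ω j = y1 then (1:ℝ) else 0) -
              (if ω j = yi then (1:ℝ) else 0))) * Real.log θ := by
            nlinarith [hω.2, hlogθ]
          calc (1:ℝ) = Real.exp 0 := Real.exp_zero.symm
            _ ≤ _ := Real.exp_le_exp.mpr this
        exact le_mul_of_one_le_right (hprod_nonneg ω) h1
      have hpg0 : ∀ y, 0 ≤ p y * g y := fun y =>
        mul_nonneg (hp0 y) (Real.exp_pos _).le
      have hmean : ∑ y, p y * g y = c := by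
        have hgy1 : g y1 = θ := by
          show Real.exp (((if y1 = y1 then (1:ℝ) else 0) - if y1 = yi then (1:ℝ) else 0) * Real.log θ) = θ
          rw [if_pos rfl, if_neg hne, sub_zero, one_mul, Real.exp_log hθpos]
        have hgyi : g yi = θ⁻¹ := by
          show Real.exp (((if yi = y1 then (1:ℝ) else 0) - if yi = yi then (1:ℝ) else 0) * Real.log θ) = θ⁻¹
          rw [if_neg (Ne.symm hne), if_pos rfl, zero_sub, neg_one_mul, Real.exp_neg, Real.exp_log hθpos]
        have key : ∀ y, p y * g y = p y + (if y = y1 then a * θ - a else 0)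
            + (if y = yi then b * θ⁻¹ - b else 0) := by
          intro y
          by_cases h1 : y = y1
          · subst h1
            rw [if_pos rfl, if_neg hne, hgy1, ← ha_def]; ring
          · by_cases h2 : y = yi
            · subst h2
              rw [if_neg h1, if_pos rfl, hgyi, ← hb_def]; ring
            · rw [if_neg h1, if_neg h2]
              have : g y = 1 := by
                simp only [hg_def, if_neg h1, if_neg h2, sub_zero, zero_mul, Real.exp_zero]
              rw [this]; ring
        rw [Finset.sum_congr rfl (fun y _ => key y)]
        rw [Finset.sum_add_distrib, Finset.sum_add_distrib, hp1,
          Finset.sum_ite_eq' Finset.univ y1, Finset.sum_ite_eq' Finset.univ yi,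
          if_pos (Finset.mem_univ y1), if_pos (Finset.mem_univ yi)]
        have haθ : a * θ = Real.sqrt a * Real.sqrt b := by
          rw [hθ_def]; field_simp
          linear_combination (-1) * Real.mul_self_sqrt ha0
        have hbθ : b * θ⁻¹ = Real.sqrt a * Real.sqrt b := by
          rw [hθ_def]; field_simp
          linear_combination (-1) * Real.mul_self_sqrt hb0
        have hsa2 : Real.sqrt a ^ 2 = a := Real.sq_sqrt ha0
        have hsb2 : Real.sqrt b ^ 2 = b := Real.sq_sqrt hb0
        rw [hc_def, sub_sq, hsa2, hsb2]
        linarith [haθ, hbθ]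
      calc ∑ ω ∈ Finset.univ.filter (fun ω : Fin n → Y =>
            (∑ j, ((if ω j = y1 then (1:ℝ) else 0) - (if ω j = yi then (1:ℝ) else 0))) ≤ 0),
          ∏ j, p (ω j)
          ≤ ∑ ω ∈ Finset.univ.filter (fun ω : Fin n → Y =>
            (∑ j, ((if ω j = y1 then (1:ℝ) else 0) - (if ω j = yi then (1:ℝ) else 0))) ≤ 0),
          ∏ j, p (ω j) * g (ω j) := Finset.sum_le_sum hstep
        _ ≤ ∑ ω : Fin n → Y, ∏ j, p (ω j) * g (ω j) :=
            Finset.sum_le_sum_of_subset_of_nonneg (Finset.filter_subset _ _)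
              (fun ω _ _ => Finset.prod_nonneg (fun j _ => hpg0 (ω j)))
        _ = (∑ y, p y * g y) ^ n := (Fintype.sum_pow (fun y => p y * g y) n).symm
        _ = c ^ n := by rw [hmean]
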